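/- Let η ∈ ℕ^6 satisfy SNec(η) and let m ∈ (0,1). Then the function g : (0,1) → ℝ defined by g(r) := η·α(r, m·r) is monotone decreasing (antitone) on (0,1); if moreover η·(1,0,0,1,1,0) ≠ 0 then g is strictly decreasing on (0,1); and if η·(1,0,0,1,1,0) = 0 then g is constant on (0,1). -/

import Mathlib

open scoped BigOperators

noncomputable section

/-- The Euclidean plane. -/
abbrev Plane := EuclideanSpace ℝ (Fin 2)

/-- A circle in the plane: a center together with a positive radius. -/
structure Circle2 where
  center : Plane
  radius : ℝ
  radius_pos : 0 < radius

/-- Two circles are tangent if the distance between their centers is the sum of radii. -/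
def Tangent (S T : Circle2) : Prop :=
  dist S.center T.center = S.radius + T.radius

/-- A packing: the open discs bounded by distinct circles are pairwise disjoint. -/
def IsPacking (P : Set Circle2) : Prop :=
  ∀ S ∈ P, ∀ T ∈ P, S ≠ T →
    Disjoint (Metric.ball S.center S.radius) (Metric.ball T.center T.radius)

/-- A neighbor cycle of `S` in `P`: a family `A : ZMod n → Circle2` with `n ≥ 1`, consisting
of circles of `P`, each tangent to `S`, consecutive ones tangent, and exhausting all
neighbors of `S` in `P`. -/
def IsNeighborCycle (P : Set Circle2) (S : Circle2) {n : ℕ} (A : ZMod n → Circle2) : Prop :=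
  1 ≤ n ∧ (∀ i, A i ∈ P) ∧ (∀ i, Tangent S (A i)) ∧
  (∀ i, Tangent (A i) (A (i + 1))) ∧
  (∀ T ∈ P, Tangent S T → ∃ i, T = A i)

/-- A compact packing: a packing in which every circle has a neighbor cycle. -/
def IsCompactPacking (P : Set Circle2) : Prop :=
  IsPacking P ∧ ∀ S ∈ P, ∃ (n : ℕ) (A : ZMod n → Circle2), IsNeighborCycle P S A

/-- The set of radii of the circles of a packing. -/
def radii (P : Set Circle2) : Set ℝ := Circle2.radius '' P

/-- The six target unordered pairs (as multisets) of radii: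
{1,1}, {r₀,r₀}, {s₀,s₀}, {1,r₀}, {1,s₀}, {r₀,s₀}. -/
def pairTargets (r₀ s₀ : ℝ) : Fin 6 → Multiset ℝ :=
  ![{1, 1}, {r₀, r₀}, {s₀, s₀}, {1, r₀}, {1, s₀}, {r₀, s₀}]

/-- The angle-count of a neighbor cycle `A`: coordinate `k` counts the indices `i` for which
the unordered pair of radii of `A i` and `A (i+1)` is the `k`-th target pair. -/
def angleCount (r₀ s₀ : ℝ) {n : ℕ} (A : ZMod n → Circle2) : Fin 6 → ℕ :=
  fun k => Set.ncard {i : ZMod n |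
    ({(A i).radius, (A (i + 1)).radius} : Multiset ℝ) = pairTargets r₀ s₀ k}

/-- Dot product of two tuples in ℕ^6. -/
def dotNN (ξ v : Fin 6 → ℕ) : ℕ := ∑ i, ξ i * v i

/-- Dot product of a tuple in ℕ^6 with a vector in ℝ^6. -/
def dotNR (ξ : Fin 6 → ℕ) (v : Fin 6 → ℝ) : ℝ := ∑ i, (ξ i : ℝ) * v i

/-- The angle at the center of a circle of radius `a` formed by the centers of mutually
tangent circles of radii `b` and `c`. -/
def ang (a b c : ℝ) : ℝ :=
  Real.arccos (((a + b) ^ 2 + (a + c) ^ 2 - (b + c) ^ 2) / (2 * (a + c) * (a + b)))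

/-- The vector α(r,s) ∈ ℝ^6. -/
def alphaVec (r s : ℝ) : Fin 6 → ℝ :=
  ![ang s 1 1, ang s r r, ang s s s, ang s 1 r, ang s 1 s, ang s r s]

/-- The vector β(r,s) ∈ ℝ^6. -/
def betaVec (r s : ℝ) : Fin 6 → ℝ :=
  ![ang r 1 1, ang r r r, ang r s s, ang r 1 r, ang r 1 s, ang r r s]

/-- The vector γ(r,s) ∈ ℝ^6. -/
def gammaVec (r s : ℝ) : Fin 6 → ℝ :=
  ![ang 1 1 1, ang 1 r r, ang 1 s s, ang 1 1 r, ang 1 1 s, ang 1 r s]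

/-- Δ₃ = {(r,s) : 0 < s < r < 1}. -/
def Delta3 : Set (ℝ × ℝ) := {p | 0 < p.2 ∧ p.2 < p.1 ∧ p.1 < 1}

/-- Π₃ = pairs (r,s) with 0 < s < r < 1 admitting a compact packing with radii {s, r, 1}. -/
def Pi3 : Set (ℝ × ℝ) :=
  {p | 0 < p.2 ∧ p.2 < p.1 ∧ p.1 < 1 ∧
    ∃ P : Set Circle2, IsCompactPacking P ∧ radii P = {p.2, p.1, 1}}

/-- Standard basis vector of ℕ^6. -/
def eb (i : Fin 6) : Fin 6 → ℕ := fun j => if j = i then 1 else 0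

/-- The symmetric map κ : Fin 3 → Fin 3 → ℕ^6 sending (0,0),(1,1),(2,2),(0,1),(0,2),(1,2)
to e₁,e₂,e₃,e₄,e₅,e₆ respectively. -/
def kappa : Fin 3 → Fin 3 → (Fin 6 → ℕ) :=
  ![![eb 0, eb 3, eb 4], ![eb 3, eb 1, eb 5], ![eb 4, eb 5, eb 2]]

/-- Seq(η): η arises as the sum ∑_{j ∈ ZMod n} κ(σ(j), σ(j+1)) for some n ≥ 1 and σ. -/
def SeqCond (η : Fin 6 → ℕ) : Prop :=
  ∃ (n : ℕ) (σ : ZMod n → Fin 3), 1 ≤ n ∧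
    η = ∑ᶠ j : ZMod n, kappa (σ j) (σ (j + 1))

/-- Mod2(η): three parity conditions. -/
def Mod2 (η : Fin 6 → ℕ) : Prop :=
  Even (dotNN η ![2,0,0,1,1,0]) ∧ Even (dotNN η ![0,2,0,1,0,1]) ∧
    Even (dotNN η ![0,0,2,0,1,1])

/-- SNec(η). -/
def SNec (η : Fin 6 → ℕ) : Prop :=
  dotNN η ![1,1,1,1,1,1] < 6 ∧ 12 < dotNN η ![6,6,2,6,3,3] ∧
    dotNN η ![1,1,0,1,1,1] ≠ 0 ∧ SeqCond η ∧ Mod2 η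

/-- RNec(ζ). -/
def RNec (ζ : Fin 6 → ℕ) : Prop :=
  dotNN ζ ![1,1,0,1,0,0] < 6 ∧ 12 < dotNN ζ ![6,2,2,3,3,2] ∧
    dotNN ζ ![2,2,0,2,1,1] ≤ 12 ∧ dotNN ζ ![1,0,1,1,1,1] ≠ 0 ∧
    SeqCond ζ ∧ Mod2 ζ ∧
    (0 < dotNN ζ ![2,0,0,1,1,0] → dotNN ζ ![2,2,0,2,1,1] < 12)

/-- The set K ⊆ ℕ^6 × ℕ^6. -/
def Kset : Set ((Fin 6 → ℕ) × (Fin 6 → ℕ)) :=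
  {p | SNec p.1 ∧ RNec p.2 ∧ p.2 2 < 35 ∧
    (dotNN p.1 ![1,0,0,1,1,0] ≠ 0 ∨ dotNN p.2 ![1,0,0,1,1,0] ≠ 0)}

lemma arccos_le_arccos' {x y : ℝ} (h : x ≤ y) : Real.arccos y ≤ Real.arccos x := by
  unfold Real.arccos; linarith [Real.monotone_arcsin h]

lemma key (η : Fin 6 → ℕ) (m : ℝ) (hm0 : 0 < m) {r : ℝ} (hr : 0 < r) :
    dotNR η (alphaVec r (m * r)) =
      (η 0 : ℝ) * Real.arccos (1 - 2/(m*r+1)^2)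
      + (η 1 : ℝ) * Real.arccos (1 - 2/(m+1)^2)
      + (η 2 : ℝ) * Real.arccos (1/2)
      + (η 3 : ℝ) * Real.arccos ((m^2*r + m*r + m - 1)/((m+1)*(m*r+1)))
      + (η 4 : ℝ) * Real.arccos ((m*r)/(m*r+1))
      + (η 5 : ℝ) * Real.arccos (m/(m+1)) := by
  have hs : 0 < m * r := mul_pos hm0 hr
  have h1 : m * r + 1 ≠ 0 := by positivity
  have h2 : m + 1 ≠ 0 := by positivity
  have h3 : m * r + r ≠ 0 := by positivity
  have h4 : r ≠ 0 := ne_of_gt hr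
  have h5 : m * r ≠ 0 := ne_of_gt hs
  have e0 : ang (m*r) 1 1 = Real.arccos (1 - 2/(m*r+1)^2) := by
    unfold ang; congr 1; field_simp; ring
  have e1 : ang (m*r) r r = Real.arccos (1 - 2/(m+1)^2) := by
    unfold ang; congr 1; field_simp; ring
  have e2 : ang (m*r) (m*r) (m*r) = Real.arccos (1/2) := by
    unfold ang; congr 1; field_simp; ring
  have e3 : ang (m*r) 1 r = Real.arccos ((m^2*r + m*r + m - 1)/((m+1)*(m*r+1))) := by
    unfold ang; congr 1; field_simp; ring
  have e4 : ang (m*r) 1 (m*r) = Real.arccos ((m*r)/(m*r+1)) := by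
    unfold ang; congr 1; field_simp; ring
  have e5 : ang (m*r) r (m*r) = Real.arccos (m/(m+1)) := by
    unfold ang; congr 1; field_simp; ring
  simp only [dotNR, alphaVec, Fin.sum_univ_six, Matrix.cons_val_zero, Matrix.cons_val_one,
    Matrix.head_cons, Matrix.cons_val_two, Matrix.tail_cons, Matrix.cons_val_three,
    Matrix.cons_val_four, Matrix.cons_val_fin_one]
  rw [e0, e1, e2, e3, e4, e5]
  rfl

/-- Monotonicity of r ↦ η·α(r, m·r) on (0,1). -/
theorem stmt_12 (η : Fin 6 → ℕ) (hη : SNec η) (m : ℝ) (hm : m ∈ Set.Ioo (0:ℝ) 1) :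
    AntitoneOn (fun r => dotNR η (alphaVec r (m * r))) (Set.Ioo 0 1) ∧
    (dotNN η ![1,0,0,1,1,0] ≠ 0 →
      StrictAntiOn (fun r => dotNR η (alphaVec r (m * r))) (Set.Ioo 0 1)) ∧
    (dotNN η ![1,0,0,1,1,0] = 0 →
      ∀ r₁ ∈ Set.Ioo (0:ℝ) 1, ∀ r₂ ∈ Set.Ioo (0:ℝ) 1,
        dotNR η (alphaVec r₁ (m * r₁)) = dotNR η (alphaVec r₂ (m * r₂))) := by
  obtain ⟨hm0, hm1⟩ := hm
  -- abbreviations for the three r-dependent arccos arguments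
  set c0 : ℝ → ℝ := fun r => 1 - 2/(m*r+1)^2 with hc0def
  set c3 : ℝ → ℝ := fun r => (m^2*r + m*r + m - 1)/((m+1)*(m*r+1)) with hc3def
  set c4 : ℝ → ℝ := fun r => (m*r)/(m*r+1) with hc4def
  have pden : ∀ r : ℝ, 0 < r → 0 < m*r+1 := fun r hr => by positivity
  -- strict monotonicity of the arguments
  have mono0 : ∀ {r₁ r₂ : ℝ}, 0 < r₁ → r₁ < r₂ → c0 r₁ < c0 r₂ := by
    intro r₁ r₂ h1 h
    have p1 := pden r₁ h1
    have p2 := pden r₂ (h1.trans h)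
    have hx : 2/(m*r₂+1)^2 < 2/(m*r₁+1)^2 := by
      apply div_lt_div_of_pos_left (by norm_num) (by positivity)
      nlinarith [mul_pos hm0 (sub_pos.mpr h)]
    simp only [hc0def]; linarith
  have mono3 : ∀ {r₁ r₂ : ℝ}, 0 < r₁ → r₁ < r₂ → c3 r₁ < c3 r₂ := by
    intro r₁ r₂ h1 h
    have p1 := pden r₁ h1
    have p2 := pden r₂ (h1.trans h)
    simp only [hc3def]
    rw [div_lt_div_iff₀ (by positivity) (by positivity)]
    nlinarith [mul_pos hm0 (sub_pos.mpr h), mul_pos (mul_pos hm0 hm0) (sub_pos.mpr h)]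
  have mono4 : ∀ {r₁ r₂ : ℝ}, 0 < r₁ → r₁ < r₂ → c4 r₁ < c4 r₂ := by
    intro r₁ r₂ h1 h
    have p1 := pden r₁ h1
    have p2 := pden r₂ (h1.trans h)
    simp only [hc4def]
    rw [div_lt_div_iff₀ (by positivity) (by positivity)]
    nlinarith [mul_pos hm0 (sub_pos.mpr h)]
  -- bounds
  have mem0 : ∀ {r : ℝ}, 0 < r → c0 r ∈ Set.Icc (-1:ℝ) 1 := by
    intro r hr
    have p1 := pden r hr
    have hs : 0 < m * r := mul_pos hm0 hr
    constructor
    · have : 2/(m*r+1)^2 ≤ 2 := by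
        rw [div_le_iff₀ (by positivity)]; nlinarith
      simp only [hc0def]; linarith
    · have : 0 < 2/(m*r+1)^2 := by positivity
      simp only [hc0def]; linarith
  have mem3 : ∀ {r : ℝ}, 0 < r → c3 r ∈ Set.Icc (-1:ℝ) 1 := by
    intro r hr
    have p1 := pden r hr
    have hs : 0 < m * r := mul_pos hm0 hr
    constructor
    · simp only [hc3def]
      rw [le_div_iff₀ (by positivity)]; nlinarith
    · simp only [hc3def]
      rw [div_le_one (by positivity)]; nlinarith
  have mem4 : ∀ {r : ℝ}, 0 < r → c4 r ∈ Set.Icc (-1:ℝ) 1 := by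
    intro r hr
    have p1 := pden r hr
    have hs : 0 < m * r := mul_pos hm0 hr
    constructor
    · simp only [hc4def]
      rw [le_div_iff₀ (by positivity)]; nlinarith
    · simp only [hc4def]
      rw [div_le_one (by positivity)]; nlinarith
  have hsum : dotNN η ![1,0,0,1,1,0] = η 0 + η 3 + η 4 := by
    simp [dotNN, Fin.sum_univ_six]
  have key' : ∀ {r : ℝ}, 0 < r → dotNR η (alphaVec r (m * r)) =
      (η 0 : ℝ) * Real.arccos (c0 r) + (η 1 : ℝ) * Real.arccos (1 - 2/(m+1)^2)
      + (η 2 : ℝ) * Real.arccos (1/2) + (η 3 : ℝ) * Real.arccos (c3 r)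
      + (η 4 : ℝ) * Real.arccos (c4 r) + (η 5 : ℝ) * Real.arccos (m/(m+1)) :=
    fun {r} hr => key η m hm0 hr
  refine ⟨?_, ?_, ?_⟩
  · intro r₁ hr₁ r₂ hr₂ h12
    simp only
    rw [key' hr₁.1, key' hr₂.1]
    rcases eq_or_lt_of_le h12 with rfl | h
    · exact le_rfl
    · have t0 := mul_le_mul_of_nonneg_left (arccos_le_arccos' (mono0 hr₁.1 h).le)
        (Nat.cast_nonneg (η 0) : (0:ℝ) ≤ η 0)
      have t3 := mul_le_mul_of_nonneg_left (arccos_le_arccos' (mono3 hr₁.1 h).le)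
        (Nat.cast_nonneg (η 3) : (0:ℝ) ≤ η 3)
      have t4 := mul_le_mul_of_nonneg_left (arccos_le_arccos' (mono4 hr₁.1 h).le)
        (Nat.cast_nonneg (η 4) : (0:ℝ) ≤ η 4)
      linarith
  · intro hne r₁ hr₁ r₂ hr₂ h
    simp only
    rw [key' hr₁.1, key' hr₂.1]
    have s0 : Real.arccos (c0 r₂) < Real.arccos (c0 r₁) :=
      Real.strictAntiOn_arccos (mem0 hr₁.1) (mem0 hr₂.1) (mono0 hr₁.1 h)
    have s3 : Real.arccos (c3 r₂) < Real.arccos (c3 r₁) :=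
      Real.strictAntiOn_arccos (mem3 hr₁.1) (mem3 hr₂.1) (mono3 hr₁.1 h)
    have s4 : Real.arccos (c4 r₂) < Real.arccos (c4 r₁) :=
      Real.strictAntiOn_arccos (mem4 hr₁.1) (mem4 hr₂.1) (mono4 hr₁.1 h)
    have t0 := mul_le_mul_of_nonneg_left s0.le (Nat.cast_nonneg (η 0) : (0:ℝ) ≤ η 0)
    have t3 := mul_le_mul_of_nonneg_left s3.le (Nat.cast_nonneg (η 3) : (0:ℝ) ≤ η 3)
    have t4 := mul_le_mul_of_nonneg_left s4.le (Nat.cast_nonneg (η 4) : (0:ℝ) ≤ η 4)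
    have hpos : 0 < η 0 ∨ 0 < η 3 ∨ 0 < η 4 := by omega
    rcases hpos with h' | h' | h'
    · have := mul_lt_mul_of_pos_left s0 (by exact_mod_cast h' : (0:ℝ) < η 0)
      linarith
    · have := mul_lt_mul_of_pos_left s3 (by exact_mod_cast h' : (0:ℝ) < η 3)
      linarith
    · have := mul_lt_mul_of_pos_left s4 (by exact_mod_cast h' : (0:ℝ) < η 4)
      linarith
  · intro h0 r₁ hr₁ r₂ hr₂
    have h04 : η 0 = 0 ∧ η 3 = 0 ∧ η 4 = 0 := by omega
    rw [key' hr₁.1, key' hr₂.1, h04.1, h04.2.1, h04.2.2]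
    simp


end
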